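/- If the bi-objective geometric-mean MOG is nonzero at x (with both individual gradients nonzero), then −∇F_GM(x) is a common descent direction: ⟨∇F_GM(x), ∇f_i(x)⟩ > 0 for i = 1, 2. -/

import Mathlib

lemma aux_inner_pos {E : Type*} [NormedAddCommGroup E] [InnerProductSpace ℝ E]
    (u v : E) (h : ‖u‖ = ‖v‖) (hne : u + v ≠ 0) : (0:ℝ) < inner ℝ (u + v) u := by
  have hsq : (inner ℝ (u + v) u : ℝ) = ‖u + v‖^2 / 2 := by
    have h1 := norm_add_sq_real u v
    have h2 : (inner ℝ (u + v) u : ℝ) = ‖u‖^2 + inner ℝ u v := by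
      rw [inner_add_left, real_inner_self_eq_norm_sq, real_inner_comm]
    rw [h2]; rw [h1, h]; ring
  rw [hsq]
  have hp : (0:ℝ) < ‖u + v‖ := norm_pos_iff.mpr hne
  positivity

theorem mog_gm_common_descent (d : ℕ) (g₁ g₂ : EuclideanSpace ℝ (Fin d))
    (h₁ : g₁ ≠ 0) (h₂ : g₂ ≠ 0)
    (hGM : (1/2 : ℝ) • (Real.sqrt (‖g₂‖ / ‖g₁‖) • g₁ + Real.sqrt (‖g₁‖ / ‖g₂‖) • g₂) ≠ 0) :
    (0 : ℝ) < inner ℝ ((1/2 : ℝ) • (Real.sqrt (‖g₂‖ / ‖g₁‖) • g₁ +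
        Real.sqrt (‖g₁‖ / ‖g₂‖) • g₂)) g₁ ∧
    (0 : ℝ) < inner ℝ ((1/2 : ℝ) • (Real.sqrt (‖g₂‖ / ‖g₁‖) • g₁ +
        Real.sqrt (‖g₁‖ / ‖g₂‖) • g₂)) g₂ := by
  set r₁ := Real.sqrt (‖g₂‖ / ‖g₁‖) with hr₁def
  set r₂ := Real.sqrt (‖g₁‖ / ‖g₂‖) with hr₂def
  have hn₁ : (0:ℝ) < ‖g₁‖ := norm_pos_iff.mpr h₁
  have hn₂ : (0:ℝ) < ‖g₂‖ := norm_pos_iff.mpr h₂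
  have hr₁ : (0:ℝ) < r₁ := Real.sqrt_pos.mpr (by positivity)
  have hr₂ : (0:ℝ) < r₂ := Real.sqrt_pos.mpr (by positivity)
  set u := r₁ • g₁ with hu
  set v := r₂ • g₂ with hv
  have hne : u + v ≠ 0 := by
    intro h; apply hGM; rw [h, smul_zero]
  have hnorm : ‖u‖ = ‖v‖ := by
    rw [hu, hv, norm_smul, norm_smul, Real.norm_eq_abs, Real.norm_eq_abs,
      abs_of_pos hr₁, abs_of_pos hr₂, hr₁def, hr₂def,
      ← Real.sqrt_sq hn₁.le, ← Real.sqrt_sq hn₂.le]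
    rw [← Real.sqrt_mul (by positivity), ← Real.sqrt_mul (by positivity)]
    congr 1
    field_simp
    simp only [Real.sqrt_sq hn₁.le, Real.sqrt_sq hn₂.le]
  have key₁ := aux_inner_pos u v hnorm hne
  have key₂ : (0:ℝ) < inner ℝ (u + v) v := by
    have := aux_inner_pos v u hnorm.symm (by rwa [add_comm])
    rwa [add_comm] at this
  constructor
  · have : (inner ℝ ((1/2 : ℝ) • (u + v)) g₁ : ℝ) = (1/2) * (r₁⁻¹ * inner ℝ (u + v) u) := by
      rw [real_inner_smul_left]
      congr 1
      rw [hu, real_inner_smul_right]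
      field_simp
    rw [this]; positivity
  · have : (inner ℝ ((1/2 : ℝ) • (u + v)) g₂ : ℝ) = (1/2) * (r₂⁻¹ * inner ℝ (u + v) v) := by
      rw [real_inner_smul_left]
      congr 1
      rw [hv, real_inner_smul_right]
      field_simp
    rw [this]; positivity
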